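/- Let p be a prime. For each r ≥ 0 let c_r = (c_{r,i})_{i≥0} be a sequence of rational numbers with c_{r,i} ∈ p^{-δ_p(r)}·Z_(p) for 0 ≤ i ≤ r-1, c_{r,r} ∈ p^{-δ_p(r)}·Z_(p)^×, and c_{r,i} = 0 for i > r; let ĉ_r be another family of sequences satisfying the same conditions. Fix n ≥ 0 and define S_n = {μ ∈ Π_{k≥0} Z_(p) : c_r·μ ∈ Z_(p) for 0 ≤ r ≤ n} and T_n = {μ : c_r·μ ∈ Z_(p) for 0 ≤ r ≤ n-1 and ĉ_n·μ ∈ Z_(p)}, where c_r·μ = Σ_i c_{r,i} μ_i (a finite sum). Then S_n ⊆ T_n implies S_n = T_n. -/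

import Mathlib

/-- `x ∈ ℤ_(p)` : a rational is a `p`-local integer iff `p` does not divide its denominator. -/
def inZLoc (p : ℕ) (x : ℚ) : Prop := ¬ (p ∣ x.den)

/-- `x` is a unit of `ℤ_(p)` : `p` divides neither numerator nor denominator. -/
def isUnitZLoc (p : ℕ) (x : ℚ) : Prop := inZLoc p x ∧ ¬ ((p : ℤ) ∣ x.num)

/-- `δ_p(n) = n + ν_p(n!)`. -/
def deltaP (p n : ℕ) : ℕ := n + (n.factorial).factorization p

section aux
variable {p : ℕ} [hp : Fact p.Prime]

lemma inZLoc_iff (x : ℚ) : inZLoc p x ↔ padicNorm p x ≤ 1 := by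
  unfold inZLoc
  rcases eq_or_ne x 0 with rfl | hx
  · simp [padicNorm, Nat.dvd_one, hp.out.ne_one]
  · rw [padicNorm.eq_zpow_of_nonzero hx,
      show (1:ℚ) = (p:ℚ) ^ (0:ℤ) from (zpow_zero _).symm,
      zpow_le_zpow_iff_right₀ (by exact_mod_cast hp.out.one_lt), neg_nonpos]
    constructor
    · intro h
      rw [padicValRat_def, padicValNat.eq_zero_of_not_dvd h]
      simp
    · intro h hdvd
      have hnum : ¬ ((p:ℤ) ∣ x.num) := by
        intro hn
        have hpn : p ∣ x.num.natAbs := Int.natAbs_dvd_natAbs.mpr (by exact_mod_cast hn)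
        have : p ∣ Nat.gcd x.num.natAbs x.den := Nat.dvd_gcd hpn hdvd
        rw [x.reduced] at this
        exact hp.out.ne_one (Nat.dvd_one.mp this)
      have h1 : padicValInt p x.num = 0 := padicValInt.eq_zero_of_not_dvd hnum
      have h2 : 1 ≤ padicValNat p x.den :=
        one_le_padicValNat_of_dvd x.pos.ne' hdvd
      rw [padicValRat_def, h1] at h
      omega

lemma isUnitZLoc_norm {x : ℚ} (h : isUnitZLoc p x) : padicNorm p x = 1 := by
  have hx : x ≠ 0 := by
    rintro rfl
    exact h.2 (dvd_zero _)
  rw [padicNorm.eq_zpow_of_nonzero hx, padicValRat_def,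
    padicValInt.eq_zero_of_not_dvd h.2, padicValNat.eq_zero_of_not_dvd h.1]
  simp

lemma inZLoc_sub {x y : ℚ} (hx : inZLoc p x) (hy : inZLoc p y) :
    inZLoc p (x - y) := by
  rw [inZLoc_iff] at *
  exact le_trans padicNorm.sub (max_le hx hy)

lemma inZLoc_zero : inZLoc p (0 : ℚ) := by
  rw [inZLoc_iff, padicNorm.zero]
  exact zero_le_one

end aux

theorem congruence_exchange (p : ℕ) (hp : p.Prime)
    (c chat : ℕ → ℕ → ℚ)
    (hc1 : ∀ r i, i < r → inZLoc p ((p : ℚ) ^ deltaP p r * c r i))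
    (hc2 : ∀ r, isUnitZLoc p ((p : ℚ) ^ deltaP p r * c r r))
    (hc3 : ∀ r i, r < i → c r i = 0)
    (hd1 : ∀ r i, i < r → inZLoc p ((p : ℚ) ^ deltaP p r * chat r i))
    (hd2 : ∀ r, isUnitZLoc p ((p : ℚ) ^ deltaP p r * chat r r))
    (hd3 : ∀ r i, r < i → chat r i = 0)
    (n : ℕ) (S T : Set (ℕ → ℚ))
    (hS : S = {μ | (∀ k, inZLoc p (μ k)) ∧
        ∀ r ≤ n, inZLoc p (∑ i ∈ Finset.range (r + 1), c r i * μ i)})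
    (hT : T = {μ | (∀ k, inZLoc p (μ k)) ∧
        (∀ r < n, inZLoc p (∑ i ∈ Finset.range (r + 1), c r i * μ i)) ∧
        inZLoc p (∑ i ∈ Finset.range (n + 1), chat n i * μ i)}) :
    S ⊆ T → S = T := by
  intro hST
  haveI : Fact p.Prime := ⟨hp⟩
  refine Set.Subset.antisymm hST ?_
  intro μ hμ
  rw [hT] at hμ
  obtain ⟨hμint, hμlt, hμhat⟩ := hμ
  rw [hS]
  refine ⟨hμint, ?_⟩
  set δ := deltaP p n with hδ
  have hp0 : (p : ℚ) ≠ 0 := Nat.cast_ne_zero.mpr hp.pos.ne'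
  have hP : ((p:ℚ) ^ δ) ≠ 0 := pow_ne_zero _ hp0
  have hu := hc2 n
  have hcnn : c n n ≠ 0 := by
    intro h0
    exact hu.2 (by simp [h0])
  set s := ∑ i ∈ Finset.range (n + 1), c n i * μ i with hs
  set t := s / c n n with hts
  have hPs : inZLoc p ((p:ℚ)^δ * s) := by
    rw [inZLoc_iff, hs, Finset.mul_sum]
    refine padicNorm.sum_le' (fun i hi => ?_) zero_le_one
    rw [← mul_assoc, padicNorm.mul]
    have h1 : padicNorm p ((p:ℚ)^δ * c n i) ≤ 1 := by
      rcases lt_or_eq_of_le (Nat.lt_succ_iff.mp (Finset.mem_range.mp hi)) with h | h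
      · exact (inZLoc_iff _).mp (hc1 n i h)
      · subst h
        exact le_of_eq (isUnitZLoc_norm hu)
    have h2 : padicNorm p (μ i) ≤ 1 := (inZLoc_iff _).mp (hμint i)
    exact mul_le_one₀ h1 (padicNorm.nonneg _) h2
  have hut : ((p:ℚ)^δ * c n n) * t = (p:ℚ)^δ * s := by
    rw [hts]
    field_simp
  have ht : inZLoc p t := by
    rw [inZLoc_iff]
    calc padicNorm p t = padicNorm p (((p:ℚ)^δ * c n n) * t) := by
          rw [padicNorm.mul, isUnitZLoc_norm hu, one_mul]
      _ = padicNorm p ((p:ℚ)^δ * s) := by rw [hut]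
      _ ≤ 1 := (inZLoc_iff _).mp hPs
  set μ' := Function.update μ n (μ n - t) with hμ'
  have hμ'eq : ∀ i, i ≠ n → μ' i = μ i := fun i hi => Function.update_of_ne hi _ _
  have hμ'n : μ' n = μ n - t := Function.update_self _ _ _
  have hct0 : c n n * t = s := by
    rw [hts, mul_div_cancel₀ _ hcnn]
  have hsum_n : ∑ i ∈ Finset.range (n+1), c n i * μ' i = 0 := by
    rw [Finset.sum_range_succ, hμ'n]
    have he : ∑ i ∈ Finset.range n, c n i * μ' i = ∑ i ∈ Finset.range n, c n i * μ i :=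
      Finset.sum_congr rfl fun i hi => by rw [hμ'eq i (Finset.mem_range.mp hi).ne]
    have hs' : s = ∑ i ∈ Finset.range n, c n i * μ i + c n n * μ n := by
      rw [hs, Finset.sum_range_succ]
    rw [he, mul_sub, hct0, hs']
    ring
  have hμ'S : μ' ∈ S := by
    rw [hS]
    refine ⟨fun k => ?_, fun r hr => ?_⟩
    · rcases eq_or_ne k n with rfl | hk
      · rw [hμ'n]
        exact inZLoc_sub (hμint k) ht
      · rw [hμ'eq k hk]
        exact hμint k
    · rcases lt_or_eq_of_le hr with h | h
      · have : ∑ i ∈ Finset.range (r+1), c r i * μ' i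
            = ∑ i ∈ Finset.range (r+1), c r i * μ i :=
          Finset.sum_congr rfl fun i hi => by
            rw [hμ'eq i (by have := Finset.mem_range.mp hi; omega)]
        rw [this]
        exact hμlt r h
      · subst h
        rw [hsum_n]
        exact inZLoc_zero
  have hμ'T := hST hμ'S
  rw [hT] at hμ'T
  obtain ⟨-, -, hhat'⟩ := hμ'T
  have hhat_diff : ∑ i ∈ Finset.range (n+1), chat n i * μ i
      - ∑ i ∈ Finset.range (n+1), chat n i * μ' i = chat n n * t := by
    rw [Finset.sum_range_succ, Finset.sum_range_succ, hμ'n]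
    have he : ∑ i ∈ Finset.range n, chat n i * μ' i
        = ∑ i ∈ Finset.range n, chat n i * μ i :=
      Finset.sum_congr rfl fun i hi => by rw [hμ'eq i (Finset.mem_range.mp hi).ne]
    rw [he]
    ring
  have hct : inZLoc p (chat n n * t) := by
    rw [← hhat_diff]
    exact inZLoc_sub hμhat hhat'
  have hnorm_eq : padicNorm p (c n n) = padicNorm p (chat n n) := by
    have h1 := isUnitZLoc_norm hu
    have h2 := isUnitZLoc_norm (hd2 n)
    rw [padicNorm.mul] at h1 h2
    have hPn : padicNorm p ((p:ℚ)^δ) ≠ 0 := padicNorm.nonzero hP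
    have := h1.trans h2.symm
    exact mul_left_cancel₀ hPn this
  intro r hr
  rcases lt_or_eq_of_le hr with h | h
  · exact hμlt r h
  · subst h
    rw [← hs, ← hct0, inZLoc_iff, padicNorm.mul, hnorm_eq, ← padicNorm.mul]
    exact (inZLoc_iff _).mp hct
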